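/- Let (R, m) be a Noetherian local ring with infinite residue field and I an m-primary ideal. Then superficial elements for I exist: there is f ∈ I and an integer c such that (I^{n+1} : f) ∩ I^c = I^n for all n ≥ c. -/

import Mathlib

set_option synthInstance.maxHeartbeats 1000000
set_option maxHeartbeats 2000000

/-- `f` is a superficial element for the ideal `I`:
`(I^(n+1) : f) ∩ I^c = I^n` for all large `n`. -/
def Superficial {R : Type*} [CommRing R] (I : Ideal R) (f : R) : Prop :=
  ∃ c : ℕ, ∀ n ≥ c, (I ^ (n + 1)).colon (Ideal.span {f}) ⊓ I ^ c = I ^ n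

namespace SuperficialAux

open Polynomial

variable {R : Type*} [CommRing R] (I : Ideal R)

/-- The image in `R[X]` of an ideal of the Rees algebra, as an `R`-submodule. -/
noncomputable def im (W : Ideal (reesAlgebra I)) : Submodule R R[X] :=
  (W.restrictScalars R).map (reesAlgebra I).val.toLinearMap

lemma mem_im {W : Ideal (reesAlgebra I)} {p : reesAlgebra I} :
    (p : R[X]) ∈ im I W ↔ p ∈ W := by
  constructor
  · rintro ⟨q, hq, hq'⟩
    exact (Subtype.ext hq' : q = p) ▸ hq
  · intro h; exact ⟨p, h, rfl⟩

lemma im_mul {W₁ W₂ : Ideal (reesAlgebra I)} {p q : R[X]}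
    (hp : p ∈ im I W₁) (hq : q ∈ im I W₂) : p * q ∈ im I (W₁ * W₂) := by
  obtain ⟨u, hu, rfl⟩ := hp
  obtain ⟨v, hv, rfl⟩ := hq
  exact ⟨u * v, Ideal.mul_mem_mul hu hv, rfl⟩

lemma coeff_mem {p : reesAlgebra I} (hp : p ∈ I.map (algebraMap R (reesAlgebra I)))
    (d : ℕ) : (p : R[X]).coeff d ∈ I ^ (d + 1) := by
  rw [Ideal.map] at hp
  induction hp using Submodule.span_induction generalizing d with
  | mem q hq =>
    obtain ⟨a, ha, rfl⟩ := hq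
    have : ((algebraMap R (reesAlgebra I)) a : R[X]) = C a := rfl
    rw [this, coeff_C]
    split_ifs with h
    · subst h; simpa using ha
    · exact zero_mem _
  | zero => simp
  | add q r _ _ hq hr =>
    have : ((q + r : reesAlgebra I) : R[X]).coeff d =
        (q : R[X]).coeff d + (r : R[X]).coeff d := by push_cast; simp
    rw [this]; exact add_mem (hq d) (hr d)
  | smul s q _ hq =>
    have : ((s • q : reesAlgebra I) : R[X]) = (s : R[X]) * (q : R[X]) := rfl
    rw [this, coeff_mul]
    refine Submodule.sum_mem _ fun c hc => ?_
    rw [Finset.HasAntidiagonal.mem_antidiagonal] at hc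
    have h1 : (s : R[X]).coeff c.1 ∈ I ^ c.1 := s.2 c.1
    have h2 : (q : R[X]).coeff c.2 ∈ I ^ (c.2 + 1) := hq c.2
    have := Ideal.mul_mem_mul h1 h2
    rwa [← pow_add, show c.1 + (c.2 + 1) = d + 1 by omega] at this

lemma mono_mem_pow (W : Ideal (reesAlgebra I))
    (hW : ∀ a ∈ I, (monomial 1 a : R[X]) ∈ im I W) :
    ∀ d (x : R), x ∈ I ^ d → (monomial d x : R[X]) ∈ im I (W ^ d) := by
  intro d
  induction d with
  | zero =>
    intro x hx
    refine ⟨⟨monomial 0 x, reesAlgebra.monomial_mem.mpr hx⟩, ?_, rfl⟩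
    simp [pow_zero]
  | succ d ih =>
    intro x hx
    rw [pow_succ, mul_comm] at hx
    refine Submodule.mul_induction_on
      (C := fun x => (monomial (d+1) x : R[X]) ∈ im I (W ^ (d+1))) hx ?_ ?_
    · intro a ha z hz
      have : (monomial (d + 1) (a * z) : R[X]) = monomial 1 a * monomial d z := by
        rw [monomial_mul_monomial, Nat.add_comm 1 d]
      rw [this]
      have := im_mul I (hW a ha) (ih z hz)
      rwa [← pow_succ'] at this
    · intro y z hy hz
      have : (monomial (d + 1) (y + z) : R[X]) =
          monomial (d + 1) y + monomial (d + 1) z := by simp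
      rw [this]; exact Submodule.add_mem _ hy hz

lemma mono_mem_map {m : ℕ} {y : R} (hy : y ∈ I * I ^ m) :
    (monomial m y : R[X]) ∈ im I (I.map (algebraMap R (reesAlgebra I))) := by
  refine Submodule.mul_induction_on
    (C := fun y => (monomial m y : R[X]) ∈ im I (I.map (algebraMap R (reesAlgebra I)))) hy ?_ ?_
  · intro a ha z hz
    have h1 : (monomial m (a * z) : R[X]) = C a * monomial m z := by
      rw [C_mul_monomial]
    refine ⟨algebraMap R (reesAlgebra I) a * ⟨monomial m z, reesAlgebra.monomial_mem.mpr hz⟩,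
      Ideal.mul_mem_right _ _ (Ideal.mem_map_of_mem _ ha), ?_⟩
    rw [h1]; rfl
  · intro u v hu hv
    have : (monomial m (u + v) : R[X]) = monomial m u + monomial m v := by simp
    rw [this]; exact Submodule.add_mem _ hu hv

lemma exists_avoid {R : Type*} [CommRing R] [IsLocalRing R]
    [Infinite (IsLocalRing.ResidueField R)] {M : Type*} [AddCommGroup M] [Module R M]
    [Module.Finite R M] (s : Finset (Submodule R M)) (hs : ∀ V ∈ s, V ≠ ⊤) :
    ∃ x : M, ∀ V ∈ s, x ∉ V := by
  classical
  set mm := IsLocalRing.maximalIdeal R with hmm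
  haveI : mm.IsMaximal := IsLocalRing.maximalIdeal.isMaximal R
  letI : Field (R ⧸ mm) := Ideal.Quotient.field mm
  haveI : Infinite (R ⧸ mm) := ‹Infinite (IsLocalRing.ResidueField R)›
  let toK : Submodule R (M ⧸ (mm • ⊤ : Submodule R M)) →
      Submodule (R ⧸ mm) (M ⧸ (mm • ⊤ : Submodule R M)) := fun N =>
    { carrier := N
      add_mem' := fun ha hb => N.add_mem ha hb
      zero_mem' := N.zero_mem
      smul_mem' := by
        intro c x hx
        obtain ⟨r, rfl⟩ := Ideal.Quotient.mk_surjective c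
        have h : (Ideal.Quotient.mk mm r) • x = r • x := rfl
        exact h ▸ N.smul_mem r hx }
  let t : Finset (Submodule (R ⧸ mm) (M ⧸ (mm • ⊤ : Submodule R M))) :=
    s.image fun V => toK (V.map (mm • ⊤ : Submodule R M).mkQ)
  have htop : ⊤ ∉ t := by
    intro ht
    obtain ⟨V, hV, hVtop⟩ := Finset.mem_image.mp ht
    have hmap : V.map (mm • ⊤ : Submodule R M).mkQ = ⊤ := by
      rw [eq_top_iff]
      intro e _
      show e ∈ (toK (V.map (mm • ⊤ : Submodule R M).mkQ) : Set _)
      rw [hVtop]; trivial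
    rw [Submodule.map_mkQ_eq_top] at hmap
    have hj : mm ≤ Ideal.jacobson ⊥ :=
      (IsLocalRing.jacobson_eq_maximalIdeal (⊥ : Ideal R) bot_ne_top).ge
    have h1 : mm • (⊤ : Submodule R M) ≤ V :=
      Submodule.smul_le_of_le_smul_of_le_jacobson_bot Module.Finite.fg_top hj
        (by rw [sup_comm] at hmap; exact hmap.ge.trans le_rfl)
    have : V = ⊤ := by
      rw [sup_comm] at hmap
      rwa [sup_eq_left.mpr h1] at hmap
    exact hs V hV this
  have hne := Subspace.biUnion_ne_univ_of_top_notMem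
    (k := R ⧸ mm) (E := M ⧸ (mm • ⊤ : Submodule R M)) htop
  obtain ⟨e, he⟩ := (Set.ne_univ_iff_exists_notMem _).mp hne
  obtain ⟨x, rfl⟩ := Submodule.Quotient.mk_surjective _ e
  refine ⟨x, fun V hV hxV => he ?_⟩
  refine Set.mem_biUnion (Finset.mem_image_of_mem _ hV) ?_
  rw [SetLike.mem_coe]
  show Submodule.Quotient.mk x ∈ V.map (mm • ⊤ : Submodule R M).mkQ
  exact Submodule.mem_map_of_mem hxV

end SuperficialAux

open Polynomial

/-- In a Noetherian local ring with infinite residue field, every `m`-primary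
ideal admits a superficial element. -/
theorem exists_superficial (R : Type*) [CommRing R] [IsNoetherianRing R]
    [IsLocalRing R] [Infinite (IsLocalRing.ResidueField R)]
    (I : Ideal R) (hprim : I.radical = IsLocalRing.maximalIdeal R) :
    ∃ f ∈ I, Superficial I f := by
  classical
  obtain ⟨(s : Finset (Ideal (reesAlgebra I))), hsinf, hsprim⟩ :=
    Submodule.isLasker (reesAlgebra I) (reesAlgebra I) (I.map (algebraMap R (reesAlgebra I)))
  haveI : Module.Finite R ↥I :=
    Module.Finite.iff_fg.mpr (IsNoetherian.noetherian I)
  let V : Ideal (reesAlgebra I) → Submodule R ↥I := fun Q =>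
    Submodule.comap ((Polynomial.monomial 1 : R →ₗ[R] R[X]).comp I.subtype)
      (SuperficialAux.im I Q.radical)
  obtain ⟨f0, hf0⟩ := SuperficialAux.exists_avoid ((s.filter fun Q => V Q ≠ ⊤).image V)
    (by
      intro W hW
      obtain ⟨Q, hQ, rfl⟩ := Finset.mem_image.mp hW
      exact (Finset.mem_filter.mp hQ).2)
  set f : R := ↑f0 with hf
  have hfI : f ∈ I := f0.2
  have hav : ∀ Q ∈ s, V Q ≠ ⊤ →
      (monomial 1 f : R[X]) ∉ SuperficialAux.im I Q.radical := by
    intro Q hQ hne hmem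
    exact hf0 (V Q) (Finset.mem_image_of_mem V (Finset.mem_filter.mpr ⟨hQ, hne⟩)) hmem
  have hkex : ∀ Q : {Q // Q ∈ s},
      ∃ n, (Q : Ideal (reesAlgebra I)).radical ^ n ≤ (Q : Ideal (reesAlgebra I)) :=
    fun Q => Ideal.exists_radical_pow_le_of_fg _ (IsNoetherian.noetherian _)
  choose kk hkk using hkex
  refine ⟨f, hfI, s.attach.sup kk, fun n hn => ?_⟩
  set c := s.attach.sup kk with hc
  apply le_antisymm
  · rintro x hx
    obtain ⟨hx1, hx2⟩ := Submodule.mem_inf.mp hx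
    by_contra hxn
    have hxf : x * f ∈ I ^ (n + 1) := Ideal.mem_colon_span_singleton.mp hx1
    have hex : ∃ j, x ∉ I ^ j := ⟨n, hxn⟩
    set j0 := Nat.find hex with hj0
    have hspec : x ∉ I ^ j0 := Nat.find_spec hex
    have hj0pos : 0 < j0 := by
      rcases Nat.eq_zero_or_pos j0 with h | h
      · exfalso; rw [h] at hspec; exact hspec (by simp)
      · exact h
    set d := j0 - 1 with hd
    have hd1 : d + 1 = j0 := Nat.succ_pred_eq_of_pos hj0pos
    have hxd : x ∈ I ^ d := not_not.mp (Nat.find_min hex (by omega))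
    have hxd1 : x ∉ I ^ (d + 1) := hd1 ▸ hspec
    have hcj : c ≤ d := by
      rcases le_or_gt j0 c with h | h
      · exact absurd (Ideal.pow_le_pow_right h hx2) hspec
      · omega
    have hdn : d < n := by
      rcases lt_or_ge d n with h | h
      · exact h
      · exact absurd (Ideal.pow_le_pow_right h hxd) hxn
    have hfx2 : f * x ∈ I * I ^ (d + 1) := by
      have h1 : f * x ∈ I ^ (n + 1) := by rwa [mul_comm]
      have h2 : I ^ (n + 1) ≤ I ^ (d + 2) := Ideal.pow_le_pow_right (by omega)
      have h3 : I ^ (d + 2) = I * I ^ (d + 1) := by rw [pow_succ']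
      exact h3 ▸ h2 h1
    have hFxi : (monomial (d + 1) (f * x) : R[X]) ∈
        SuperficialAux.im I (I.map (algebraMap R (reesAlgebra I))) :=
      SuperficialAux.mono_mem_map I hfx2
    set ξ : reesAlgebra I := ⟨monomial d x, reesAlgebra.monomial_mem.mpr hxd⟩ with hξ
    set F : reesAlgebra I :=
      ⟨monomial 1 f, reesAlgebra.monomial_mem.mpr ((pow_one I).symm ▸ hfI)⟩ with hF
    have hcoe : ((F * ξ : reesAlgebra I) : R[X]) = monomial (d + 1) (f * x) := by
      show (monomial 1 f : R[X]) * monomial d x = _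
      rw [monomial_mul_monomial, Nat.add_comm 1 d]
    have hFξJ : F * ξ ∈ I.map (algebraMap R (reesAlgebra I)) :=
      (SuperficialAux.mem_im I).mp (by rw [hcoe]; exact hFxi)
    have key : ∀ Q ∈ s, ξ ∈ Q := by
      intro Q hQs
      have hJQ : I.map (algebraMap R (reesAlgebra I)) ≤ Q := by
        rw [← hsinf]; exact Finset.inf_le hQs
      by_cases hrad : F ∈ Q.radical
      · have hVQ : V Q = ⊤ := by
          by_contra hne
          exact hav Q hQs hne ((SuperficialAux.mem_im I).mpr hrad)
        have hW : ∀ a ∈ I, (monomial 1 a : R[X]) ∈ SuperficialAux.im I Q.radical := by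
          intro a ha
          have hmem : (⟨a, ha⟩ : ↥I) ∈ V Q := hVQ ▸ Submodule.mem_top
          exact hmem
        have hpow : ξ ∈ Q.radical ^ d :=
          (SuperficialAux.mem_im I).mp (SuperficialAux.mono_mem_pow I _ hW d x hxd)
        have hdk : kk ⟨Q, hQs⟩ ≤ d :=
          le_trans (Finset.le_sup (Finset.mem_attach s ⟨Q, hQs⟩)) hcj
        exact hkk ⟨Q, hQs⟩ (Ideal.pow_le_pow_right hdk hpow)
      · have hmul : ξ * F ∈ Q := hJQ (by rwa [mul_comm])
        rcases (Ideal.isPrimary_iff.mp (hsprim hQs)).2 hmul with h | h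
        · exact h
        · exact absurd h hrad
    have hξJ : ξ ∈ I.map (algebraMap R (reesAlgebra I)) := by
      rw [← hsinf]
      exact Submodule.mem_finsetInf.mpr fun Q hQ => key Q hQ
    have hco := SuperficialAux.coeff_mem I hξJ d
    have hcx : ((ξ : R[X])).coeff d = x := by
      show (monomial d x : R[X]).coeff d = x
      simp [coeff_monomial]
    rw [hcx] at hco
    exact hxd1 hco
  · intro x hx
    refine Submodule.mem_inf.mpr ⟨?_, Ideal.pow_le_pow_right hn hx⟩
    rw [Ideal.mem_colon_span_singleton]
    have : x * f ∈ I ^ n * I := Ideal.mul_mem_mul hx hfI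
    rwa [← pow_succ] at this
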